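/- arXiv:1511.00354 — 3 statements merged into one kernel-verified Lean document; each statement's English description precedes it below -/
import Mathlib

section
/- Let F be a nonarchimedean local field, ψ an unramified additive character of F, and m ≥ 1 an integer. Let W : SL₂(F) → ℂ be a function satisfying: (i) W(n(b)·g) = ψ(b)·W(g) for all b ∈ F and g ∈ SL₂(F); (ii) W(g·n(b)) = ψ(b)·W(g) for all b ∈ 𝔪^{-m} and g ∈ SL₂(F). If W(t(a)) ≠ 0 for some a ∈ F^×, then a² ∈ 1 + 𝔪^m. (Lemma 3.2(1) of the paper, stated for any function with the equivariance properties of a Howe-vector Whittaker function.) -/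
/-!
We model a nonarchimedean local field as a field `F` complete with respect to a
nontrivial discrete valuation `Valued.v : F → ℤₘ₀` (the hypothesis
`Function.Surjective (Valued.v : F → ℤₘ₀)` says the valuation is discrete and
nontrivial, with value group exactly `ℤ`), with finite residue field
(`FiniteResidueField F` below says `𝒪/𝔪` is finite).
For `m : ℤ`, `mpow F m` is the fractional ideal `𝔪^m = {x : v(x) ≥ m}` (written
multiplicatively: `v x ≤ ofAdd (-m)`), and `oneAddMpow F m` is the set `1 + 𝔪^m`.
-/

open scoped Multiplicative WithZero
open MatrixGroups MeasureTheory

noncomputable section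

/-- The fractional ideal `𝔪^m = {x ∈ F : v(x) ≥ m}`. -/
def mpow (F : Type*) [Field F] [Valued F ℤᵐ⁰] (m : ℤ) : Set F :=
  {x : F | Valued.v x ≤ ((Multiplicative.ofAdd (-m) : Multiplicative ℤ) : ℤᵐ⁰)}

/-- The set `1 + 𝔪^m`. -/
def oneAddMpow (F : Type*) [Field F] [Valued F ℤᵐ⁰] (m : ℤ) : Set F :=
  {x : F | x - 1 ∈ mpow F m}

/-- An additive character `ψ` of `F` is unramified if it is trivial on the ring of
integers `𝒪 = 𝔪^0` but nontrivial on `𝔪^{-1}`. -/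
def IsUnramified (F : Type*) [Field F] [Valued F ℤᵐ⁰] (ψ : AddChar F ℂ) : Prop :=
  (∀ x ∈ mpow F 0, ψ x = 1) ∧ ∃ x ∈ mpow F (-1), ψ x ≠ 1

/-- The residue field `𝒪/𝔪` is finite: finitely many elements of `𝒪` cover `𝒪`
modulo `𝔪`. -/
def FiniteResidueField (F : Type*) [Field F] [Valued F ℤᵐ⁰] : Prop :=
  ∃ S : Finset F, ∀ x ∈ mpow F 0, ∃ y ∈ S, x - y ∈ mpow F 1

/-- The residue field of `F` has characteristic different from `2`, i.e. `2` is a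
unit of the ring of integers, i.e. `2 ∉ 𝔪`. -/
def ResidueCharNeTwo (F : Type*) [Field F] [Valued F ℤᵐ⁰] : Prop :=
  (2 : F) ∉ mpow F 1

/-- `n(b) = [[1,b],[0,1]] ∈ SL₂(F)`. -/
def nMat (F : Type*) [Field F] (b : F) : SL(2,F) :=
  ⟨!![1, b; 0, 1], by simp [Matrix.det_fin_two_of]⟩

/-- `n̄(x) = [[1,0],[x,1]] ∈ SL₂(F)`. -/
def nbarMat (F : Type*) [Field F] (x : F) : SL(2,F) :=
  ⟨!![1, 0; x, 1], by simp [Matrix.det_fin_two_of]⟩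

/-- `t(a) = [[a,0],[0,a⁻¹]] ∈ SL₂(F)` for `a ∈ F^×`. -/
def tMat (F : Type*) [Field F] (a : Fˣ) : SL(2,F) :=
  ⟨!![(a : F), 0; 0, ((a⁻¹ : Fˣ) : F)], by simp [Matrix.det_fin_two_of]⟩

/-- `w = [[0,1],[-1,0]] ∈ SL₂(F)`. -/
def wMat (F : Type*) [Field F] : SL(2,F) :=
  ⟨!![0, 1; -1, 0], by simp [Matrix.det_fin_two_of]⟩

/-- Lemma 3.2(1). Let `ψ` be unramified, `m ≥ 1`, and let
`W : SL₂(F) → ℂ` satisfy `W(n(b)·g) = ψ(b)·W(g)` for all `b ∈ F` and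
`W(g·n(b)) = ψ(b)·W(g)` for all `b ∈ 𝔪^{-m}`. If `W(t(a)) ≠ 0` for some
`a ∈ F^×`, then `a² ∈ 1 + 𝔪^m`. -/
theorem howe_vector_torus_support
    (F : Type*) [Field F] [Valued F ℤᵐ⁰] [CompleteSpace F]
    (hdisc : Function.Surjective (Valued.v : F → ℤᵐ⁰))
    (hfin : FiniteResidueField F)
    (ψ : AddChar F ℂ) (hψcont : Continuous ψ) (hψ : IsUnramified F ψ)
    (m : ℤ) (hm : 1 ≤ m)
    (W : SL(2,F) → ℂ)
    (hW1 : ∀ (b : F) (g : SL(2,F)), W (nMat F b * g) = ψ b * W g)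
    (hW2 : ∀ b ∈ mpow F (-m), ∀ g : SL(2,F), W (g * nMat F b) = ψ b * W g)
    (a : Fˣ) (hWa : W (tMat F a) ≠ 0) :
    ((a : F)) ^ 2 ∈ oneAddMpow F m := by
  obtain ⟨hψ0, x₀, hx₀mem, hx₀⟩ := hψ
  have hψne : ∀ y : F, ψ y ≠ 0 := by
    intro y
    have h : ψ y * ψ (-y) = 1 := by
      rw [← AddChar.map_add_eq_mul, add_neg_cancel, AddChar.map_zero_eq_one]
    exact left_ne_zero_of_mul_eq_one h
  have key : ∀ b ∈ mpow F (-m), ψ (((a:F)^2 - 1) * b) = 1 := by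
    intro b hb
    have hmat : tMat F a * nMat F b = nMat F ((a:F)^2 * b) * tMat F a := by
      ext i j
      rw [Matrix.SpecialLinearGroup.coe_mul, Matrix.SpecialLinearGroup.coe_mul]
      fin_cases i <;> fin_cases j <;>
        simp [tMat, nMat, Matrix.mul_apply, Fin.sum_univ_succ, sq, mul_assoc,
          Units.mul_inv_cancel_right] <;> field_simp
    have h1 := hW2 b hb (tMat F a)
    have h2 := hW1 ((a:F)^2 * b) (tMat F a)
    rw [hmat, h2] at h1
    have hcancel : ψ ((a:F)^2 * b) = ψ b := mul_right_cancel₀ hWa h1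
    have hsplit : ψ ((a:F)^2 * b) = ψ (((a:F)^2 - 1) * b) * ψ b := by
      rw [← AddChar.map_add_eq_mul]
      ring_nf
    rw [hsplit] at hcancel
    rcases mul_left_eq_self₀.mp hcancel with h | h
    · exact h
    · exact absurd h (hψne b)
  set c : F := (a:F)^2 - 1 with hc
  show c ∈ mpow F m
  by_contra hcon
  have hc0 : c ≠ 0 := by
    intro h0
    apply hcon
    simp only [mpow, Set.mem_setOf_eq, h0, map_zero]
    exact zero_le'
  obtain ⟨u, hu⟩ : ∃ u : Multiplicative ℤ, Valued.v c = (u : ℤᵐ⁰) := by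
    have hvne : Valued.v c ≠ (0:ℤᵐ⁰) := by simpa using hc0
    rcases WithZero.ne_zero_iff_exists.mp hvne with ⟨u, hu⟩
    exact ⟨u, hu.symm⟩
  have hugt : (Multiplicative.ofAdd (-m) : Multiplicative ℤ) < u := by
    have : ¬ Valued.v c ≤ ((Multiplicative.ofAdd (-m) : Multiplicative ℤ) : ℤᵐ⁰) := hcon
    rw [hu] at this
    exact_mod_cast lt_of_not_ge this
  have hx₀ne : x₀ ≠ 0 := by
    intro h0
    exact hx₀ (by rw [h0, AddChar.map_zero_eq_one])
  set x : F := x₀ * c⁻¹ with hx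
  have hxmem : x ∈ mpow F (-m) := by
    have hvx : Valued.v x = Valued.v x₀ * (Valued.v c)⁻¹ := by
      rw [hx, Valuation.map_mul, Valuation.map_inv]
    have hvx₀ : Valued.v x₀ ≤ ((Multiplicative.ofAdd (1:ℤ) : Multiplicative ℤ) : ℤᵐ⁰) := by
      simpa [mpow] using hx₀mem
    show Valued.v x ≤ ((Multiplicative.ofAdd (-(-m)) : Multiplicative ℤ) : ℤᵐ⁰)
    rw [hvx, hu]
    calc Valued.v x₀ * ((u : ℤᵐ⁰))⁻¹
        ≤ ((Multiplicative.ofAdd (1:ℤ) : Multiplicative ℤ) : ℤᵐ⁰) * ((u : ℤᵐ⁰))⁻¹ :=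
          mul_le_mul_left hvx₀ _
      _ ≤ ((Multiplicative.ofAdd (-(-m)) : Multiplicative ℤ) : ℤᵐ⁰) := by
          rw [← WithZero.coe_inv, ← WithZero.coe_mul, WithZero.coe_le_coe]
          have : (-m : ℤ) < Multiplicative.toAdd u := hugt
          rw [← ofAdd_toAdd u, ← ofAdd_neg, ← ofAdd_add,
            Multiplicative.ofAdd_le]
          omega
  have := key x hxmem
  rw [hx, ← mul_assoc, mul_comm c x₀, mul_assoc, mul_inv_cancel₀ hc0, mul_one] at this
  exact hx₀ this
end
end

section
/- Let F be a nonarchimedean local field, ψ an unramified additive character of F, and m ≥ 1 an integer. Let W : SL₂(F) → ℂ be a function satisfying: (i) W(n(b)·g) = ψ(b)·W(g) for all b ∈ F and g ∈ SL₂(F); (ii) W(g·n̄(x)) = W(g) for all x ∈ 𝔪^{3m} and g ∈ SL₂(F). If W(t(a)·w) ≠ 0 for some a ∈ F^×, then a² ∈ 𝔪^{-3m}, i.e. v(a) ≥ −3m/2. (Lemma 3.2(2) of the paper; the key identity is t(a)·w·n̄(x) = n(−a²x)·t(a)·w.) -/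
/-!
We model a nonarchimedean local field as a field `F` complete with respect to a
nontrivial discrete valuation `Valued.v : F → ℤₘ₀` (the hypothesis
`Function.Surjective (Valued.v : F → ℤₘ₀)` says the valuation is discrete and
nontrivial, with value group exactly `ℤ`), with finite residue field
(`FiniteResidueField F` below says `𝒪/𝔪` is finite).
For `m : ℤ`, `mpow F m` is the fractional ideal `𝔪^m = {x : v(x) ≥ m}` (written
multiplicatively: `v x ≤ ofAdd (-m)`), and `oneAddMpow F m` is the set `1 + 𝔪^m`.
-/

open scoped Multiplicative WithZero
open MatrixGroups MeasureTheory

noncomputable section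

lemma key_identity (F : Type*) [Field F] (a : Fˣ) (x : F) :
    tMat F a * wMat F * nbarMat F x = nMat F (-((a : F) ^ 2 * x)) * (tMat F a * wMat F) := by
  have ha : (a : F) ≠ 0 := a.ne_zero
  ext i j
  simp only [Matrix.SpecialLinearGroup.coe_mul]
  fin_cases i <;> fin_cases j <;>
    simp [tMat, wMat, nbarMat, nMat, Matrix.mul_apply, Fin.sum_univ_two,
      Units.val_inv_eq_inv_val] <;>
    field_simp <;> ring

/-- Lemma 3.2(2). Let `ψ` be unramified, `m ≥ 1`, and let
`W : SL₂(F) → ℂ` satisfy `W(n(b)·g) = ψ(b)·W(g)` for all `b ∈ F` and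
`W(g·n̄(x)) = W(g)` for all `x ∈ 𝔪^{3m}`. If `W(t(a)·w) ≠ 0` for some
`a ∈ F^×`, then `a² ∈ 𝔪^{-3m}`. -/
theorem howe_vector_big_cell_support
    (F : Type*) [Field F] [Valued F ℤᵐ⁰] [CompleteSpace F]
    (hdisc : Function.Surjective (Valued.v : F → ℤᵐ⁰))
    (hfin : FiniteResidueField F)
    (ψ : AddChar F ℂ) (hψcont : Continuous ψ) (hψ : IsUnramified F ψ)
    (m : ℤ) (hm : 1 ≤ m)
    (W : SL(2,F) → ℂ)
    (hW1 : ∀ (b : F) (g : SL(2,F)), W (nMat F b * g) = ψ b * W g)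
    (hW2 : ∀ x ∈ mpow F (3 * m), ∀ g : SL(2,F), W (g * nbarMat F x) = W g)
    (a : Fˣ) (hWa : W (tMat F a * wMat F) ≠ 0) :
    ((a : F)) ^ 2 ∈ mpow F (-(3 * m)) := by
  by_contra hcon
  simp only [mpow, Set.mem_setOf_eq, not_le, neg_neg] at hcon
  -- get y with v y ≤ ofAdd 1, ψ y ≠ 1
  obtain ⟨y, hy, hyψ⟩ := hψ.2
  simp only [mpow, Set.mem_setOf_eq, neg_neg] at hy
  have ha2 : ((a : F) ^ 2) ≠ 0 := pow_ne_zero 2 a.ne_zero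
  have hva2 : (Valued.v ((a : F) ^ 2) : ℤᵐ⁰) ≠ 0 := by
    simpa using ha2
  obtain ⟨u, hu⟩ := WithZero.ne_zero_iff_exists.mp hva2
  have hu' : ((Multiplicative.ofAdd (3 * m) : Multiplicative ℤ) : ℤᵐ⁰) < (u : ℤᵐ⁰) := by
    rw [hu]; exact hcon
  have hu2 : Multiplicative.ofAdd (3 * m) < u := by
    exact_mod_cast hu'
  have hu3 : 3 * m + 1 ≤ Multiplicative.toAdd u := by
    have h := Multiplicative.toAdd_lt.mpr hu2
    simp only [toAdd_ofAdd] at h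
    omega
  set x : F := -y / (a : F) ^ 2 with hxdef
  have hx : x ∈ mpow F (3 * m) := by
    simp only [mpow, Set.mem_setOf_eq]
    have hvx : Valued.v x = Valued.v y / Valued.v ((a : F) ^ 2) := by
      rw [hxdef, map_div₀, Valuation.map_neg]
    rw [hvx, ← hu, div_le_iff₀ (zero_lt_iff.mpr WithZero.coe_ne_zero)]
    refine le_trans hy ?_
    rw [← WithZero.coe_mul, WithZero.coe_le_coe]
    rw [← ofAdd_toAdd u, ← ofAdd_add, Multiplicative.ofAdd_le]
    omega
  have h1 := hW2 x hx (tMat F a * wMat F)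
  rw [key_identity, hW1] at h1
  have hval : -((a : F) ^ 2 * x) = y := by
    rw [hxdef]; field_simp
  rw [hval] at h1
  exact hyψ ((mul_eq_right₀ hWa).mp h1)
end
end

section
/- Let F be a nonarchimedean local field with absolute value |·| and let C > 0 be a real number. Then there exists an integer i₀ = i₀(C) such that for all integers i ≥ i₀ and all x ∈ F with |x| ≤ C: an element n̄(y) (y ∈ F) satisfies n̄(y)·n(x) ∈ B·N̄_i if and only if y ∈ 𝔪^{3i}, where B is the subgroup of upper triangular matrices in SL₂(F) and N̄_i = {n̄(ȳ) : ȳ ∈ 𝔪^{3i}}. (Lemma 3.7(2) of the paper.) -/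
/-!
We model a nonarchimedean local field as a field `F` complete with respect to a
nontrivial discrete valuation `Valued.v : F → ℤₘ₀` (the hypothesis
`Function.Surjective (Valued.v : F → ℤₘ₀)` says the valuation is discrete and
nontrivial, with value group exactly `ℤ`), with finite residue field
(`FiniteResidueField F` below says `𝒪/𝔪` is finite).
For `m : ℤ`, `mpow F m` is the fractional ideal `𝔪^m = {x : v(x) ≥ m}` (written
multiplicatively: `v x ≤ ofAdd (-m)`), and `oneAddMpow F m` is the set `1 + 𝔪^m`.
-/

open scoped Multiplicative WithZero
open MatrixGroups MeasureTheory

noncomputable section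

/-- Lemma 3.7(2). Here the bound `|x| ≤ C` (for a real `C > 0`) is
encoded by the equivalent condition `v(x) ≤ γ` for an element `γ ≠ 0` of the value
group `ℤₘ₀`.  There is `i₀ = i₀(γ)` such that for all `i ≥ i₀` and all `x` with
`|x| ≤ C`: `n̄(y)·n(x)` lies in `B·N̄_i` (i.e. equals `[[a,b],[0,a⁻¹]]·n̄(ȳ)` for some
`a ≠ 0`, `b`, and `ȳ ∈ 𝔪^{3i}`) if and only if `y ∈ 𝔪^{3i}`. -/
theorem bruhat_cell_membership
    (F : Type*) [Field F] [Valued F ℤᵐ⁰] [CompleteSpace F]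
    (hdisc : Function.Surjective (Valued.v : F → ℤᵐ⁰))
    (hfin : FiniteResidueField F)
    (γ : ℤᵐ⁰) (hγ : γ ≠ 0) :
    ∃ i₀ : ℤ, ∀ i : ℤ, i₀ ≤ i →
      ∀ x : F, Valued.v x ≤ γ →
        ∀ y : F,
          ((∃ a b ybar : F, a ≠ 0 ∧ ybar ∈ mpow F (3 * i) ∧
              (!![1, 0; y, 1] : Matrix (Fin 2) (Fin 2) F) * !![1, x; 0, 1] =
                !![a, b; 0, a⁻¹] * !![1, 0; ybar, 1]) ↔
            y ∈ mpow F (3 * i)) := by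
  obtain ⟨c, rfl⟩ := WithZero.ne_zero_iff_exists.mp hγ
  set cz : ℤ := Multiplicative.toAdd c with hcz
  refine ⟨|cz| + 1, fun i hi x hx y => ?_⟩
  have hci : cz - 3 * i < 0 := by
    have h1 : |cz| + 1 ≤ i := hi
    have h2 : cz ≤ |cz| := le_abs_self cz
    have h3 : (0:ℤ) ≤ |cz| := abs_nonneg cz
    linarith
  -- key smallness fact
  have hlt : ∀ u w : F, Valued.v u ≤ (c : ℤᵐ⁰) →
      Valued.v w ≤ ((Multiplicative.ofAdd (-(3*i)) : Multiplicative ℤ) : ℤᵐ⁰) →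
      Valued.v (u * w) < 1 := by
    intro u w hu hw
    have h2 : Valued.v (u*w) ≤ (c : ℤᵐ⁰) * ((Multiplicative.ofAdd (-(3*i)) : Multiplicative ℤ) : ℤᵐ⁰) := by
      rw [map_mul]; exact mul_le_mul' hu hw
    refine lt_of_le_of_lt h2 ?_
    rw [← WithZero.coe_mul, ← WithZero.coe_one, WithZero.coe_lt_coe]
    have : c * Multiplicative.ofAdd (-(3*i)) = Multiplicative.ofAdd (cz - 3*i) := by
      rw [hcz, sub_eq_add_neg, ofAdd_add, ofAdd_toAdd]
    rw [this, ← ofAdd_zero, Multiplicative.ofAdd_lt]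
    exact hci
  constructor
  · rintro ⟨a, b, ybar, ha, hybar, heq⟩
    have h10 : ((!![1, 0; y, 1] : Matrix (Fin 2) (Fin 2) F) * !![1, x; 0, 1]) 1 0 =
        ((!![a, b; 0, a⁻¹] : Matrix (Fin 2) (Fin 2) F) * !![1, 0; ybar, 1]) 1 0 := by rw [heq]
    have h11 : ((!![1, 0; y, 1] : Matrix (Fin 2) (Fin 2) F) * !![1, x; 0, 1]) 1 1 =
        ((!![a, b; 0, a⁻¹] : Matrix (Fin 2) (Fin 2) F) * !![1, 0; ybar, 1]) 1 1 := by rw [heq]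
    simp [Matrix.mul_apply, Fin.sum_univ_two] at h10 h11
    -- h10 : y = a⁻¹ * ybar,  h11 : y * x + 1 = a⁻¹
    have hy : y = (y * x + 1) * ybar := by rw [h11]; exact h10
    have hkey : y * (1 - x * ybar) = ybar := by linear_combination hy
    have hvx : Valued.v (x * ybar) < 1 := hlt x ybar hx hybar
    have hv1 : Valued.v (1 - x * ybar) = 1 := by
      rw [sub_eq_add_neg]
      have : Valued.v (-(x * ybar)) < 1 := by rwa [Valuation.map_neg]
      exact Valuation.map_one_add_of_lt _ this
    have : Valued.v y = Valued.v ybar := by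
      have := congrArg (Valued.v : F → ℤᵐ⁰) hkey
      rwa [map_mul, hv1, mul_one] at this
    show Valued.v y ≤ _
    rw [this]; exact hybar
  · intro hy
    have hxy : Valued.v (x * y) < 1 := hlt x y hx hy
    have hv1 : Valued.v (1 + x * y) = 1 := Valuation.map_one_add_of_lt _ hxy
    have hne : (1 + x * y) ≠ 0 := by
      intro h; rw [h, map_zero] at hv1; exact zero_ne_one hv1
    refine ⟨(1 + x * y)⁻¹, x, y * (1 + x * y)⁻¹, inv_ne_zero hne, ?_, ?_⟩
    · show Valued.v (y * (1 + x*y)⁻¹) ≤ _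
      rw [map_mul, map_inv₀, hv1, inv_one, mul_one]
      exact hy
    · have hne' : 1 + y * x ≠ 0 := by rwa [mul_comm y x]
      ext i' j'
      fin_cases i' <;> fin_cases j' <;>
        (try simp [Matrix.mul_apply, Fin.sum_univ_two, inv_inv]) <;>
        (try field_simp) <;> (try ring)
end
end
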